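/- Fix a lattice Ω ⊂ ℂ and a point z ∈ ℂ with z ∉ Ω. Then the family (1/(z-ω)² − 1/ω²), indexed by ω ∈ Ω∖{0}, is absolutely summable; consequently the Weierstrass ℘-function ℘(Ω,z) := 1/z² + ∑_{ω ∈ Ω∖{0}} (1/(z-ω)² − 1/ω²) is well defined for all z ∉ Ω. -/

import Mathlib

/-- The lattice `ℤω₁ + ℤω₂` generated by two complex numbers. -/
def lattice (ω₁ ω₂ : ℂ) : Set ℂ := {w : ℂ | ∃ m n : ℤ, w = (m : ℂ) * ω₁ + (n : ℂ) * ω₂}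

/-- The Weierstrass ℘-function attached to a set `Ω ⊂ ℂ`. -/
noncomputable def wp (Ω : Set ℂ) (z : ℂ) : ℂ :=
  1 / z ^ 2 + ∑' ω : {w : ℂ // w ∈ Ω ∧ w ≠ 0}, (1 / (z - (ω : ℂ)) ^ 2 - 1 / (ω : ℂ) ^ 2)

/-- The auxiliary real-linear map `(a,b) ↦ a • ω₁ + b • ω₂`. -/
noncomputable def latmap (ω₁ ω₂ : ℂ) : (Fin 2 → ℝ) →ₗ[ℝ] ℂ where
  toFun v := v 0 • ω₁ + v 1 • ω₂
  map_add' v w := by simp [add_smul]; ring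
  map_smul' c v := by simp [mul_smul, smul_add]

lemma latmap_injective (ω₁ ω₂ : ℂ) (hindep : LinearIndependent ℝ ![ω₁, ω₂]) :
    Function.Injective (latmap ω₁ ω₂) := by
  rw [injective_iff_map_eq_zero]
  intro v hv
  have h := (Fintype.linearIndependent_iff.mp hindep) v ?_
  · funext i; fin_cases i <;> simp [h 0, h 1]
  · simpa [Fin.sum_univ_two, latmap] using hv

/-- The key pointwise estimate for the tail of the ℘-series. -/
lemma wp_summand_bound (z ω : ℂ) (hz : z ≠ 0) (h : 2 * ‖z‖ ≤ ‖ω‖) :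
    ‖1 / (z - ω) ^ 2 - 1 / ω ^ 2‖ ≤ 10 * ‖z‖ / ‖ω‖ ^ 3 := by
  have hz' : 0 < ‖z‖ := norm_pos_iff.mpr hz
  have hω' : 0 < ‖ω‖ := by linarith
  have hω : ω ≠ 0 := norm_pos_iff.mp hω'
  have hzω' : ‖ω‖ / 2 ≤ ‖z - ω‖ := by
    have := norm_sub_norm_le ω z
    rw [norm_sub_rev] at this
    linarith [this]
  have hzω : z - ω ≠ 0 := by
    intro h0
    rw [h0, norm_zero] at hzω'
    linarith
  have hid : 1 / (z - ω) ^ 2 - 1 / ω ^ 2 = z * (2 * ω - z) / ((z - ω) ^ 2 * ω ^ 2) := by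
    field_simp
    ring
  rw [hid, norm_div, norm_mul, norm_mul, norm_pow, norm_pow]
  have hnum : ‖z‖ * ‖2 * ω - z‖ ≤ ‖z‖ * (5 / 2 * ‖ω‖) := by
    have : ‖2 * ω - z‖ ≤ 2 * ‖ω‖ + ‖z‖ := by
      calc ‖2 * ω - z‖ ≤ ‖2 * ω‖ + ‖z‖ := norm_sub_le _ _
        _ = 2 * ‖ω‖ + ‖z‖ := by rw [norm_mul]; norm_num
    nlinarith
  have hden : (‖ω‖ / 2) ^ 2 * ‖ω‖ ^ 2 ≤ ‖z - ω‖ ^ 2 * ‖ω‖ ^ 2 := by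
    gcongr
  calc ‖z‖ * ‖2 * ω - z‖ / (‖z - ω‖ ^ 2 * ‖ω‖ ^ 2)
      ≤ ‖z‖ * (5 / 2 * ‖ω‖) / ((‖ω‖ / 2) ^ 2 * ‖ω‖ ^ 2) := by
        apply div_le_div₀ (by positivity) hnum (by positivity) hden
    _ = 10 * ‖z‖ / ‖ω‖ ^ 3 := by
        rw [div_eq_div_iff (by positivity) (by positivity)]; ring

lemma norm_intCast_pi (x : Fin 2 → ℤ) : ‖(fun i => (x i : ℝ))‖ = ‖x‖ := by
  simp only [Pi.norm_def]
  congr 1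

lemma finite_norm_le (R : ℝ) : {x : Fin 2 → ℤ | ‖x‖ ≤ R}.Finite := by
  have : {x : Fin 2 → ℤ | ‖x‖ ≤ R} ⊆ Metric.closedBall 0 R := by
    intro x hx; simpa [Metric.mem_closedBall, dist_zero_right] using hx
  exact ((isCompact_closedBall (0 : Fin 2 → ℤ) R).finite DiscreteTopology.isDiscrete).subset this

/-- for a lattice `Ω` and `z ∉ Ω`, the family
`(1/(z-ω)² − 1/ω²)_{ω ∈ Ω∖{0}}` is absolutely summable, so that the Weierstrass
℘-function `℘(Ω,z) = 1/z² + ∑_{ω ∈ Ω∖{0}} (1/(z-ω)² − 1/ω²)` is well defined. -/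
theorem weierstrass_wp_summable (ω₁ ω₂ : ℂ) (hindep : LinearIndependent ℝ ![ω₁, ω₂])
    (z : ℂ) (hz : z ∉ lattice ω₁ ω₂) :
    Summable (fun ω : {w : ℂ // w ∈ lattice ω₁ ω₂ ∧ w ≠ 0} =>
      ‖1 / (z - (ω : ℂ)) ^ 2 - 1 / (ω : ℂ) ^ 2‖) := by
  have hz0 : z ≠ 0 := by
    intro h; exact hz ⟨0, 0, by simp [h]⟩
  have hinj := latmap_injective ω₁ ω₂ hindep
  -- the integer version of the lattice map
  set L : (Fin 2 → ℤ) → ℂ := fun x => (x 0 : ℂ) * ω₁ + (x 1 : ℂ) * ω₂ with hL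
  have hLlat : ∀ x : Fin 2 → ℤ, L x = latmap ω₁ ω₂ (fun i => (x i : ℝ)) := by
    intro x; simp [hL, latmap, Complex.real_smul]
  have hLinj : Function.Injective L := by
    intro x y hxy
    rw [hLlat, hLlat] at hxy
    have := hinj hxy
    funext i
    exact_mod_cast congrFun this i
  -- anti-Lipschitz bound
  obtain ⟨K, K0, hK⟩ := (latmap ω₁ ω₂).exists_antilipschitzWith
    (LinearMap.ker_eq_bot.mpr hinj)
  have hKpos : (0 : ℝ) < K := K0
  have hKb : ∀ x : Fin 2 → ℤ, (‖x‖ : ℝ) ≤ K * ‖L x‖ := by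
    intro x
    have h1 := hK.le_mul_dist (fun i => (x i : ℝ)) 0
    rw [dist_zero_right, map_zero, dist_zero_right, norm_intCast_pi, ← hLlat] at h1
    exact h1
  -- the index equivalence
  have hmem : ∀ x : {x : Fin 2 → ℤ // x ≠ 0}, L x.1 ∈ lattice ω₁ ω₂ ∧ L x.1 ≠ 0 := by
    intro x
    refine ⟨⟨x.1 0, x.1 1, rfl⟩, fun h0 => x.2 (hLinj (by simpa [hL] using h0))⟩
  let e : {x : Fin 2 → ℤ // x ≠ 0} ≃ {w : ℂ // w ∈ lattice ω₁ ω₂ ∧ w ≠ 0} :=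
    Equiv.ofBijective (fun x => ⟨L x.1, hmem x⟩)
      ⟨fun x y hxy => Subtype.ext (hLinj (by simpa using congrArg Subtype.val hxy)),
       by
        rintro ⟨w, ⟨m, n, rfl⟩, hw0⟩
        refine ⟨⟨![m, n], ?_⟩, ?_⟩
        · intro h0
          apply hw0
          have h0m : m = 0 := by simpa using congrFun h0 0
          have h0n : n = 0 := by simpa using congrFun h0 1
          simp [h0m, h0n]
        · apply Subtype.ext
          simp [hL]⟩
  rw [← Equiv.summable_iff e]
  -- comparison with the Eisenstein-type series
  have hsum : Summable (fun x : {x : Fin 2 → ℤ // x ≠ 0} =>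
      (10 * ‖z‖ * K ^ 3) * ‖(x : Fin 2 → ℤ)‖ ^ (-(3 : ℝ))) := by
    exact ((EisensteinSeries.summable_one_div_norm_rpow
      (by norm_num : (2:ℝ) < 3)).subtype _).mul_left _
  apply Summable.of_norm_bounded_eventually hsum
  rw [Filter.eventually_cofinite]
  have hz' : (0 : ℝ) < ‖z‖ := norm_pos_iff.mpr hz0
  have hsubset : {x : {x : Fin 2 → ℤ // x ≠ 0} |
      ¬‖‖1 / (z - ((e x : ℂ))) ^ 2 - 1 / ((e x : ℂ)) ^ 2‖‖ ≤
        (10 * ‖z‖ * K ^ 3) * ‖(x : Fin 2 → ℤ)‖ ^ (-(3 : ℝ))} ⊆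
      {x | ‖(x : Fin 2 → ℤ)‖ ≤ K * (2 * ‖z‖)} := by
    intro x hx
    by_contra hbig
    apply hx
    have hbig' : K * (2 * ‖z‖) < ‖(x : Fin 2 → ℤ)‖ := not_le.mp (fun hc => hbig hc)
    have hxne : (x : Fin 2 → ℤ) ≠ 0 := x.2
    have hxpos : (0 : ℝ) < ‖(x : Fin 2 → ℤ)‖ := norm_pos_iff.mpr hxne
    have hω : (e x : ℂ) = L x.1 := rfl
    have hωge : 2 * ‖z‖ < ‖L x.1‖ :=
      (mul_lt_mul_iff_right₀ hKpos).mp (lt_of_lt_of_le hbig' (hKb x.1))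
    have hLpos : (0 : ℝ) < ‖L x.1‖ := lt_of_le_of_lt (by positivity) hωge
    have hb1 := wp_summand_bound z (L x.1) hz0 hωge.le
    rw [hω, Real.norm_of_nonneg (norm_nonneg _)]
    refine hb1.trans ?_
    have hrpow : ‖(x : Fin 2 → ℤ)‖ ^ (-(3 : ℝ)) = (‖(x : Fin 2 → ℤ)‖ ^ 3)⁻¹ := by
      rw [show (-(3:ℝ)) = ((-3 : ℤ) : ℝ) by norm_num, Real.rpow_intCast, zpow_neg]
      norm_num
    rw [hrpow]
    calc 10 * ‖z‖ / ‖L x.1‖ ^ 3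
        ≤ 10 * ‖z‖ * K ^ 3 / ‖(x : Fin 2 → ℤ)‖ ^ 3 := by
          rw [div_le_div_iff₀ (by positivity) (by positivity)]
          calc 10 * ‖z‖ * ‖(x : Fin 2 → ℤ)‖ ^ 3
              ≤ 10 * ‖z‖ * ((K : ℝ) * ‖L x.1‖) ^ 3 := by
                have h := hKb x.1
                gcongr
          _ = 10 * ‖z‖ * K ^ 3 * ‖L x.1‖ ^ 3 := by ring
      _ = 10 * ‖z‖ * K ^ 3 * (‖(x : Fin 2 → ℤ)‖ ^ 3)⁻¹ := by rw [div_eq_mul_inv]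
  refine (finite_norm_le (K * (2 * ‖z‖))).preimage
    (Set.injOn_of_injective Subtype.val_injective) |>.subset hsubset
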